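/- There is a contravariant functor Ψ from the category R (whose objects are points b = (b_i^ρ) satisfying b_j^{ρρ_i} b_i^ρ = b_i^{ρρ_j} b_j^ρ, and whose morphisms h: b → b' are collections of scalars h_ρ ∈ k with b_i^ρ h_ρ = h_{ρρ_i} b'^ρ_i) to the category C of cyclic A-modules A/M with dim_k(A/M)_ρ = 1 for all ρ and e_ρ ∉ M, taking b to A/M_b, and Ψ is an isomorphism of categories. -/

import Mathlib

open MvPolynomial

section

variable {k : Type*} [Field k] {G : Type*} [CommGroup G] {n : ℕ}
variable [DecidableEq (G →* kˣ)]

/-- The free `S`-module `A = ⊕_{ρ ∈ G*} S e_ρ`, with `G* = Hom(G, kˣ)`. -/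
abbrev Acar (k : Type*) [Field k] (G : Type*) [CommGroup G] (n : ℕ) :=
  (G →* kˣ) →₀ MvPolynomial (Fin n) k

/-- The `G*`-degree of a monomial exponent vector. -/
def degMon (χ : Fin n → G →* kˣ) (u : Fin n →₀ ℕ) : G →* kˣ :=
  u.prod fun i e => χ i ^ e

/-- The homogeneous component of degree `τ` of a polynomial. -/
noncomputable def homComp (χ : Fin n → G →* kˣ) (τ : G →* kˣ)
    (p : MvPolynomial (Fin n) k) : MvPolynomial (Fin n) k :=
  ∑ u ∈ p.support.filter (fun u => degMon χ u = τ), monomial u (coeff u p)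

/-- Left multiplication by the idempotent `e_σ ∈ A` on `A`. -/
noncomputable def eMul (χ : Fin n → G →* kˣ) (σ : G →* kˣ) (m : Acar k G n) :
    Acar k G n :=
  ∑ ρ ∈ m.support, Finsupp.single ρ (homComp χ (σ * ρ⁻¹) (m ρ))

/-- A left `A`-ideal: an `S`-submodule stable under all `e_σ`. -/
def IsLeftIdeal (χ : Fin n → G →* kˣ)
    (N : Submodule (MvPolynomial (Fin n) k) (Acar k G n)) : Prop :=
  ∀ (σ : G →* kˣ), ∀ m ∈ N, eMul χ σ m ∈ N

/-- The degree-`ρ` homogeneous component of `A`. -/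
noncomputable def homPiece (k : Type*) [Field k] (χ : Fin n → G →* kˣ) (ρ : G →* kˣ) :
    Submodule k (Acar k G n) :=
  Submodule.span k {f | ∃ (u : Fin n →₀ ℕ) (σ : G →* kˣ),
    degMon χ u * σ = ρ ∧ f = Finsupp.single σ (monomial u 1)}

/-- Objects of the category `𝓡`: McKay quiver representations
`b = (b_i^ρ)` of dimension vector `(1,…,1)` satisfying the relations
`b_j^{ρρ_i} b_i^ρ = b_i^{ρρ_j} b_j^ρ`. -/
def ObjR (k : Type*) [Field k] (G : Type*) [CommGroup G] (n : ℕ)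
    (χ : Fin n → G →* kˣ) : Type _ :=
  {b : Fin n → (G →* kˣ) → k //
    ∀ (i j : Fin n) (ρ : G →* kˣ), b j (ρ * χ i) * b i ρ = b i (ρ * χ j) * b j ρ}

/-- Morphisms `h : b ⟶ b'` in `𝓡`: scalars `h_ρ` with `b_i^ρ h_ρ = h_{ρρ_i} b'^ρ_i`. -/
def HomR (χ : Fin n → G →* kˣ) (b b' : ObjR k G n χ) : Type _ :=
  {h : (G →* kˣ) → k //
    ∀ (i : Fin n) (ρ : G →* kˣ), b.1 i ρ * h ρ = h (ρ * χ i) * b'.1 i ρ}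

/-- The generator `x_i e_ρ − b_i^ρ e_{ρρ_i}` of `M_b`. -/
noncomputable def gen (χ : Fin n → G →* kˣ) (b : Fin n → (G →* kˣ) → k)
    (i : Fin n) (ρ : G →* kˣ) : Acar k G n :=
  Finsupp.single ρ (X i) - Finsupp.single (ρ * χ i) (C (b i ρ))

/-- The submodule `M_b ⊆ A`. -/
noncomputable def Mb (χ : Fin n → G →* kˣ) (b : Fin n → (G →* kˣ) → k) :
    Submodule (MvPolynomial (Fin n) k) (Acar k G n) :=
  Submodule.span _ (Set.range fun p : Fin n × (G →* kˣ) => gen χ b p.1 p.2)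

/-- Objects of the category `𝓒`: left `A`-ideals `M` such that the cyclic
module `A/M` has `G*`-graded Hilbert function one and `e_ρ ∉ M` for all `ρ`. -/
def IsObjC (χ : Fin n → G →* kˣ)
    (M : Submodule (MvPolynomial (Fin n) k) (Acar k G n)) : Prop :=
  IsLeftIdeal χ M ∧
  (∀ ρ : G →* kˣ, Finsupp.single ρ (1 : MvPolynomial (Fin n) k) ∉ M) ∧
  (∀ ρ : G →* kˣ,
    Module.finrank k ((homPiece k χ ρ).map (M.mkQ.restrictScalars k)) = 1)

/-- Morphisms `A/M ⟶ A/M'` in `𝓒`: `A`-module homomorphisms, i.e. `S`-linear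
maps `A → A/M'` killing `M` and commuting with all the idempotents `e_σ`. -/
def HomC (χ : Fin n → G →* kˣ)
    (M M' : Submodule (MvPolynomial (Fin n) k) (Acar k G n)) : Type _ :=
  {f : Acar k G n →ₗ[MvPolynomial (Fin n) k] (Acar k G n ⧸ M') //
    (∀ m ∈ M, f m = 0) ∧
    ∀ (σ : G →* kˣ) (m m' : Acar k G n),
      Submodule.Quotient.mk m' = f m →
        Submodule.Quotient.mk (eMul χ σ m') = f (eMul χ σ m)}


/-! ### Auxiliary lemmas -/

section Aux

variable (χ : Fin n → G →* kˣ)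

lemma degMon_zero : degMon χ 0 = 1 := rfl

lemma degMon_add (u v : Fin n →₀ ℕ) :
    degMon χ (u + v) = degMon χ u * degMon χ v := by
  classical
  exact Finsupp.prod_add_index (fun i _ => pow_zero (χ i)) (fun i _ e e' => pow_add (χ i) e e')

lemma degMon_single (i : Fin n) (e : ℕ) : degMon χ (Finsupp.single i e) = χ i ^ e := by
  classical
  rw [degMon, Finsupp.prod_single_index]
  exact pow_zero (χ i)

lemma coeff_homComp (τ : G →* kˣ) (p : MvPolynomial (Fin n) k) (v : Fin n →₀ ℕ) :
    coeff v (homComp χ τ p) = if degMon χ v = τ then coeff v p else 0 := by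
  classical
  rw [homComp, coeff_sum]
  by_cases hv : v ∈ p.support.filter (fun u => degMon χ u = τ)
  · rw [Finset.sum_eq_single v]
    · simp only [Finset.mem_filter] at hv
      simp [coeff_monomial, hv.2]
    · intro u hu hne
      simp [coeff_monomial, hne]
    · intro h; exact absurd hv h
  · rw [Finset.sum_eq_zero]
    · simp only [Finset.mem_filter, not_and] at hv
      by_cases hvs : v ∈ p.support
      · rw [if_neg (hv hvs)]
      · simp only [MvPolynomial.notMem_support_iff] at hvs
        simp [hvs]
    · intro u hu
      rcases eq_or_ne u v with rfl | hne
      · exact absurd hu hv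
      · simp [coeff_monomial, hne]

lemma homComp_zero (τ : G →* kˣ) : homComp χ τ (0 : MvPolynomial (Fin n) k) = 0 := by
  simp [homComp]

lemma homComp_add (τ : G →* kˣ) (p q : MvPolynomial (Fin n) k) :
    homComp χ τ (p + q) = homComp χ τ p + homComp χ τ q := by
  ext v
  simp only [coeff_homComp, coeff_add]
  split <;> simp

lemma homComp_monomial (τ : G →* kˣ) (u : Fin n →₀ ℕ) (c : k) :
    homComp χ τ (monomial u c) = if τ = degMon χ u then monomial u c else 0 := by
  classical
  ext v
  rw [coeff_homComp]
  rcases eq_or_ne v u with rfl | hne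
  · by_cases h : degMon χ v = τ
    · rw [if_pos h, if_pos h.symm]
    · rw [if_neg h, if_neg (fun hc => h hc.symm), coeff_zero]
  · have h0 : coeff v (monomial u c) = 0 := by simp [coeff_monomial, Ne.symm hne]
    rw [h0, ite_self]
    split
    · rw [h0]
    · rw [coeff_zero]

lemma homComp_monomial_mul (τ : G →* kˣ) (u : Fin n →₀ ℕ) (c : k)
    (p : MvPolynomial (Fin n) k) :
    homComp χ τ (monomial u c * p) =
      monomial u c * homComp χ ((degMon χ u)⁻¹ * τ) p := by
  classical
  ext v
  rw [coeff_homComp, mul_comm ((monomial u) c), mul_comm ((monomial u) c),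
    coeff_mul_monomial', coeff_mul_monomial', coeff_homComp]
  by_cases hle : u ≤ v
  · rw [if_pos hle, if_pos hle]
    have hdeg : degMon χ v = degMon χ u * degMon χ (v - u) := by
      rw [← degMon_add]
      congr 1
      ext i
      simp only [Finsupp.add_apply, Finsupp.tsub_apply]
      exact (Nat.add_sub_cancel' (hle i)).symm
    have key : (degMon χ v = τ) ↔ (degMon χ (v - u) = (degMon χ u)⁻¹ * τ) := by
      rw [hdeg]
      constructor
      · intro h; rw [← h]; exact (inv_mul_cancel_left (degMon χ u) (degMon χ (v - u))).symm
      · intro h; rw [h]; exact mul_inv_cancel_left (degMon χ u) τ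
    by_cases hd : degMon χ v = τ
    · rw [if_pos hd, if_pos (key.mp hd)]
    · rw [if_neg hd, if_neg (fun hc => hd (key.mpr hc)), zero_mul]
  · rw [if_neg hle, if_neg hle, ite_self]

end Aux

section Aux2

variable (χ : Fin n → G →* kˣ)

lemma homComp_neg (τ : G →* kˣ) (p : MvPolynomial (Fin n) k) :
    homComp χ τ (-p) = - homComp χ τ p := by
  ext v
  simp only [coeff_homComp, coeff_neg]
  split <;> simp

lemma eMul_apply (σ : G →* kˣ) (m : Acar k G n) (ρ : G →* kˣ) :
    eMul χ σ m ρ = homComp χ (σ * ρ⁻¹) (m ρ) := by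
  classical
  rw [eMul, Finsupp.finset_sum_apply]
  by_cases h : ρ ∈ m.support
  · rw [Finset.sum_eq_single ρ]
    · rw [Finsupp.single_apply, if_pos rfl]
    · intro ρ' _ hne; rw [Finsupp.single_apply, if_neg hne]
    · intro hn; exact absurd h hn
  · rw [Finset.sum_eq_zero, Finsupp.notMem_support_iff.mp h, homComp_zero]
    intro ρ' hρ'
    rw [Finsupp.single_apply, if_neg (fun hc => h (by rw [← hc]; exact hρ'))]

lemma eMul_zero (σ : G →* kˣ) : eMul χ σ (0 : Acar k G n) = 0 := by
  simp [eMul]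

lemma eMul_add (σ : G →* kˣ) (m m' : Acar k G n) :
    eMul χ σ (m + m') = eMul χ σ m + eMul χ σ m' := by
  ext ρ
  rw [Finsupp.add_apply, eMul_apply, eMul_apply, eMul_apply, Finsupp.add_apply,
    homComp_add]

lemma eMul_neg (σ : G →* kˣ) (m : Acar k G n) : eMul χ σ (-m) = - eMul χ σ m := by
  ext ρ
  rw [Finsupp.neg_apply, eMul_apply, eMul_apply, Finsupp.neg_apply, homComp_neg]

lemma eMul_sub (σ : G →* kˣ) (m m' : Acar k G n) :
    eMul χ σ (m - m') = eMul χ σ m - eMul χ σ m' := by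
  rw [sub_eq_add_neg, eMul_add, eMul_neg, sub_eq_add_neg]

lemma eMul_sum (σ : G →* kˣ) {α : Type*} (s : Finset α) (f : α → Acar k G n) :
    eMul χ σ (∑ a ∈ s, f a) = ∑ a ∈ s, eMul χ σ (f a) := by
  classical
  induction s using Finset.cons_induction with
  | empty => simp [eMul_zero]
  | cons a s ha ih => rw [Finset.sum_cons, eMul_add, ih, Finset.sum_cons]

lemma eMul_monomial_smul (σ : G →* kˣ) (u : Fin n →₀ ℕ) (c : k) (m : Acar k G n) :
    eMul χ σ (monomial u c • m) =
      monomial u c • eMul χ ((degMon χ u)⁻¹ * σ) m := by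
  ext ρ
  rw [eMul_apply, Finsupp.smul_apply, Finsupp.smul_apply, smul_eq_mul, smul_eq_mul,
    homComp_monomial_mul, eMul_apply, mul_assoc ((degMon χ u)⁻¹) σ ρ⁻¹]

lemma eMul_single (σ ρ : G →* kˣ) (u : Fin n →₀ ℕ) (c : k) :
    eMul χ σ (Finsupp.single ρ (monomial u c)) =
      if σ * ρ⁻¹ = degMon χ u then Finsupp.single ρ (monomial u c) else 0 := by
  classical
  ext ρ'
  rw [eMul_apply, Finsupp.single_apply]
  by_cases h : ρ = ρ'
  · subst h
    rw [if_pos rfl, homComp_monomial]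
    by_cases hs : σ * ρ⁻¹ = degMon χ u
    · rw [if_pos hs, if_pos hs, Finsupp.single_apply, if_pos rfl]
    · rw [if_neg hs, if_neg hs, Finsupp.coe_zero, Pi.zero_apply]
  · rw [if_neg h, homComp_zero]
    split
    · rw [Finsupp.single_apply, if_neg h]
    · rw [Finsupp.coe_zero, Pi.zero_apply]

lemma eMul_single_C (σ ρ : G →* kˣ) (c : k) :
    eMul χ σ (Finsupp.single ρ (C c)) =
      if σ = ρ then Finsupp.single ρ (C c) else 0 := by
  have h := eMul_single χ σ ρ 0 c
  rw [monomial_zero'] at h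
  rw [h]
  by_cases hs : σ = ρ
  · rw [if_pos hs, if_pos ((by rw [hs]; exact mul_inv_cancel ρ : σ * ρ⁻¹ = 1).trans
      (degMon_zero χ).symm)]
  · rw [if_neg hs,
      if_neg (fun hc => hs (mul_inv_eq_one.mp (hc.trans (degMon_zero χ))))]

end Aux2

section Aux3

variable (χ : Fin n → G →* kˣ)

/-- The operator `x_i`-action on the `k`-vector space with basis `G*`. -/
noncomputable def Lop (b : Fin n → (G →* kˣ) → k) (i : Fin n) :
    Module.End k ((G →* kˣ) →₀ k) :=
  Finsupp.lsum k fun ρ => b i ρ • Finsupp.lsingle (ρ * χ i)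

lemma Lop_single (b : Fin n → (G →* kˣ) → k) (i : Fin n) (ρ : G →* kˣ) (c : k) :
    Lop χ b i (Finsupp.single ρ c) = Finsupp.single (ρ * χ i) (b i ρ * c) := by
  simp [Lop, Finsupp.smul_single, smul_eq_mul]

lemma Lop_comm (b : ObjR k G n χ) (i j : Fin n) :
    Lop χ b.1 i * Lop χ b.1 j = Lop χ b.1 j * Lop χ b.1 i := by
  apply Finsupp.lhom_ext
  intro ρ c
  rw [Module.End.mul_apply, Module.End.mul_apply, Lop_single, Lop_single, Lop_single,
    Lop_single]
  have hco : b.1 i (ρ * χ j) * (b.1 j ρ * c) = b.1 j (ρ * χ i) * (b.1 i ρ * c) := by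
    rw [← mul_assoc, ← mul_assoc, ← b.2 i j ρ]
  rw [hco, mul_right_comm ρ (χ j) (χ i)]

/-- The algebra map `S → End_k(k G*)` determined by `b`. -/
noncomputable def phi (b : ObjR k G n χ) :
    MvPolynomial (Fin n) k →ₐ[k] Module.End k ((G →* kˣ) →₀ k) :=
  letI : CommSemiring ↥(Algebra.adjoin k (Set.range (Lop χ b.1))) :=
    Algebra.adjoinCommSemiringOfComm k (by
      rintro x ⟨i, rfl⟩ y ⟨j, rfl⟩
      exact Lop_comm χ b i j)
  ((Algebra.adjoin k (Set.range (Lop χ b.1))).val).comp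
    (aeval fun i => (⟨Lop χ b.1 i, Algebra.subset_adjoin ⟨i, rfl⟩⟩ :
      ↥(Algebra.adjoin k (Set.range (Lop χ b.1)))))

lemma phi_X (b : ObjR k G n χ) (i : Fin n) : phi χ b (X i) = Lop χ b.1 i := by
  simp [phi]

lemma phi_C_apply (b : ObjR k G n χ) (c : k) (v : (G →* kˣ) →₀ k) :
    phi χ b (C c) v = c • v := by
  rw [← MvPolynomial.algebraMap_eq, AlgHom.commutes, Module.algebraMap_end_apply]

/-- The map `A → k G*` induced by `b`. -/
noncomputable def Tmap (b : ObjR k G n χ) : Acar k G n →ₗ[k] ((G →* kˣ) →₀ k) :=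
  Finsupp.lsum k fun ρ =>
    (LinearMap.applyₗ (Finsupp.single ρ 1)).comp (phi χ b).toLinearMap

lemma Tmap_single (b : ObjR k G n χ) (ρ : G →* kˣ) (p : MvPolynomial (Fin n) k) :
    Tmap χ b (Finsupp.single ρ p) = phi χ b p (Finsupp.single ρ 1) := by
  simp [Tmap]

lemma Tmap_smul (b : ObjR k G n χ) (p : MvPolynomial (Fin n) k) (m : Acar k G n) :
    Tmap χ b (p • m) = phi χ b p (Tmap χ b m) := by
  induction m using Finsupp.induction_linear with
  | zero => simp
  | add f g hf hg => rw [smul_add, map_add, hf, hg, map_add, map_add]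
  | single ρ q =>
      rw [Finsupp.smul_single, smul_eq_mul, Tmap_single, Tmap_single, map_mul,
        Module.End.mul_apply]

/-- `k G* → A`, `δ_ρ ↦ e_ρ`-scaled: `v ↦ ∑ C (v ρ) e_ρ`. -/
noncomputable def Sb : ((G →* kˣ) →₀ k) →ₗ[k] Acar k G n :=
  Finsupp.mapRange.linearMap (Algebra.linearMap k (MvPolynomial (Fin n) k))

lemma Sb_single (ρ : G →* kˣ) (c : k) :
    (Sb (Finsupp.single ρ c) : Acar k G n) = Finsupp.single ρ (C c) := by
  simp [Sb, Finsupp.mapRange_single, Algebra.linearMap_apply, MvPolynomial.algebraMap_eq]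

lemma Sb_apply (v : (G →* kˣ) →₀ k) (ρ : G →* kˣ) :
    (Sb v : Acar k G n) ρ = C (v ρ) := by
  simp [Sb, Finsupp.mapRange.linearMap_apply, Finsupp.mapRange_apply,
    Algebra.linearMap_apply, MvPolynomial.algebraMap_eq]

lemma gen_def (b : Fin n → (G →* kˣ) → k) (i : Fin n) (ρ : G →* kˣ) :
    gen χ b i ρ =
      Finsupp.single ρ (X i) - Finsupp.single (ρ * χ i) (C (b i ρ)) := rfl

lemma gen_mem (b : Fin n → (G →* kˣ) → k) (i : Fin n) (ρ : G →* kˣ) :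
    gen χ b i ρ ∈ Mb χ b :=
  Submodule.subset_span ⟨(i, ρ), rfl⟩

lemma ksmul_eq (c : k) (m : Acar k G n) :
    c • m = (C c : MvPolynomial (Fin n) k) • m := by
  rw [← MvPolynomial.algebraMap_eq]
  exact (algebraMap_smul _ c m).symm

lemma single_C_eq_smul (c : k) (ρ : G →* kˣ) :
    (Finsupp.single ρ (C c) : Acar k G n) = c • Finsupp.single ρ 1 := by
  rw [ksmul_eq, Finsupp.smul_single, smul_eq_mul, mul_one]

lemma Xsmul_Sb (b : Fin n → (G →* kˣ) → k) (i : Fin n) (v : (G →* kˣ) →₀ k) :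
    (X i : MvPolynomial (Fin n) k) • (Sb v : Acar k G n) - Sb (Lop χ b i v) ∈ Mb χ b := by
  induction v using Finsupp.induction_linear with
  | zero => simp only [map_zero, smul_zero, sub_zero]; exact (Mb χ b).zero_mem
  | add f g hf hg =>
      have h := (Mb χ b).add_mem hf hg
      rw [map_add, map_add, map_add, smul_add]
      convert h using 1
      abel
  | single τ c =>
      rw [Sb_single, Lop_single, Sb_single, Finsupp.smul_single, smul_eq_mul]
      have key : (Finsupp.single τ ((X i : MvPolynomial (Fin n) k) * C c) : Acar k G n) -
          Finsupp.single (τ * χ i) (C (b i τ * c)) = (C c : MvPolynomial (Fin n) k) • gen χ b i τ := by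
        rw [gen_def, smul_sub, Finsupp.smul_single, Finsupp.smul_single, smul_eq_mul,
          smul_eq_mul, mul_comm (X i : MvPolynomial (Fin n) k) (C c), ← map_mul, mul_comm (b i τ) c]
      rw [key]
      exact (Mb χ b).smul_mem _ (gen_mem χ b i τ)

/-- Normal form: every element of `A` is congruent to its `Tmap`-image mod `M_b`. -/
lemma NF (b : ObjR k G n χ) (m : Acar k G n) :
    m - Sb (Tmap χ b m) ∈ Mb χ b.1 := by
  induction m using Finsupp.induction_linear with
  | zero => simp only [map_zero, sub_zero]; exact (Mb χ b.1).zero_mem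
  | add f g hf hg =>
      have h := (Mb χ b.1).add_mem hf hg
      rw [map_add, map_add]
      convert h using 1
      abel
  | single ρ p =>
      induction p using MvPolynomial.induction_on with
      | C c =>
          rw [Tmap_single, phi_C_apply, Finsupp.smul_single, smul_eq_mul, mul_one,
            Sb_single, sub_self]
          exact (Mb χ b.1).zero_mem
      | add p q hp hq =>
          have h := (Mb χ b.1).add_mem hp hq
          rw [Finsupp.single_add, map_add]
          rw [map_add]
          convert h using 1
          abel
      | mul_X p i hp =>
          have h1 : (Finsupp.single ρ (p * X i) : Acar k G n) =
              (X i : MvPolynomial (Fin n) k) • Finsupp.single ρ p := by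
            rw [Finsupp.smul_single, smul_eq_mul, mul_comm]
          have h2 : Tmap χ b (Finsupp.single ρ (p * X i)) =
              Lop χ b.1 i (Tmap χ b (Finsupp.single ρ p)) := by
            rw [Tmap_single, Tmap_single, mul_comm, map_mul, Module.End.mul_apply, phi_X]
          rw [h2, h1]
          have hsum := (Mb χ b.1).add_mem ((Mb χ b.1).smul_mem (X i) hp)
            (Xsmul_Sb χ b.1 i (Tmap χ b (Finsupp.single ρ p)))
          convert hsum using 1
          rw [smul_sub]
          abel

lemma Tmap_gen (b : ObjR k G n χ) (i : Fin n) (ρ : G →* kˣ) :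
    Tmap χ b (gen χ b.1 i ρ) = 0 := by
  rw [gen_def, map_sub, Tmap_single, Tmap_single, phi_X, Lop_single, phi_C_apply,
    Finsupp.smul_single, smul_eq_mul, sub_self]

lemma Tmap_Mb (b : ObjR k G n χ) {m : Acar k G n} (hm : m ∈ Mb χ b.1) :
    Tmap χ b m = 0 := by
  refine Submodule.span_induction ?_ ?_ ?_ ?_ hm
  · rintro _ ⟨⟨i, ρ⟩, rfl⟩
    exact Tmap_gen χ b i ρ
  · exact map_zero _
  · intro x y _ _ hx hy
    rw [map_add, hx, hy, add_zero]
  · intro p x _ hx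
    rw [Tmap_smul, hx, map_zero]

lemma Mb_leftIdeal (b : Fin n → (G →* kˣ) → k) : IsLeftIdeal χ (Mb χ b) := by
  intro σ m hm
  revert σ
  refine Submodule.span_induction ?_ ?_ ?_ ?_ hm
  · rintro _ ⟨⟨i, ρ⟩, rfl⟩ σ
    show eMul χ σ (gen χ b i ρ) ∈ Mb χ b
    have hX : (X i : MvPolynomial (Fin n) k) = monomial (Finsupp.single i 1) 1 := rfl
    rw [gen_def, eMul_sub, hX, eMul_single, eMul_single_C]
    have hiff : (σ * ρ⁻¹ = degMon χ (Finsupp.single i 1)) ↔ (σ = ρ * χ i) := by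
      rw [degMon_single, show χ i ^ 1 = χ i from pow_one (χ i)]
      constructor
      · intro h
        calc σ = σ * ρ⁻¹ * ρ := (inv_mul_cancel_right σ ρ).symm
        _ = χ i * ρ := by rw [h]
        _ = ρ * χ i := mul_comm (χ i) ρ
      · intro h
        rw [h, mul_comm ρ (χ i)]
        exact mul_inv_cancel_right (χ i) ρ
    by_cases hs : σ = ρ * χ i
    · rw [if_pos (hiff.mpr hs), if_pos hs, ← hX, ← gen]
      exact gen_mem χ b i ρ
    · rw [if_neg (fun hc => hs (hiff.mp hc)), if_neg hs, sub_zero]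
      exact (Mb χ b).zero_mem
  · intro σ
    rw [eMul_zero]
    exact (Mb χ b).zero_mem
  · intro x y _ _ hx hy σ
    rw [eMul_add]
    exact (Mb χ b).add_mem (hx σ) (hy σ)
  · intro p x _ hx σ
    have hp : p • x = ∑ u ∈ p.support, monomial u (coeff u p) • x := by
      rw [← Finset.sum_smul, support_sum_monomial_coeff]
    rw [hp, eMul_sum]
    refine Submodule.sum_mem _ fun u hu => ?_
    rw [eMul_monomial_smul]
    exact (Mb χ b).smul_mem _ (hx _)

lemma scalar_zero_of_mem {M : Submodule (MvPolynomial (Fin n) k) (Acar k G n)}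
    {ρ : G →* kˣ} {c : k}
    (hne : Finsupp.single ρ (1 : MvPolynomial (Fin n) k) ∉ M)
    (h : Finsupp.single ρ (C c) ∈ M) : c = 0 := by
  by_contra hc
  apply hne
  have h2 := M.smul_mem (C c⁻¹) h
  rw [Finsupp.smul_single, smul_eq_mul, ← map_mul, inv_mul_cancel₀ hc, map_one] at h2
  exact h2

end Aux3

section Aux4

variable (χ : Fin n → G →* kˣ)

omit [DecidableEq (G →* kˣ)] in
lemma cmul_one (τ : G →* kˣ) : τ * 1 = τ := mul_one τ

omit [DecidableEq (G →* kˣ)] in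
lemma cone_mul (τ : G →* kˣ) : 1 * τ = τ := one_mul τ

omit [DecidableEq (G →* kˣ)] in
lemma cmul_assoc (a b c : G →* kˣ) : a * b * c = a * (b * c) := mul_assoc a b c

omit [DecidableEq (G →* kˣ)] in
lemma cmul_comm (a b : G →* kˣ) : a * b = b * a := mul_comm a b

omit [DecidableEq (G →* kˣ)] in
lemma cpow_zero (a : G →* kˣ) : a ^ (0 : ℕ) = 1 := pow_zero a

omit [DecidableEq (G →* kˣ)] in
lemma cpow_succ' (a : G →* kˣ) (e : ℕ) : a ^ (e + 1) = a * a ^ e := pow_succ' a e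

lemma Lop_pow_single (b : Fin n → (G →* kˣ) → k) (i : Fin n) (e : ℕ) (τ : G →* kˣ)
    (c : k) : ∃ d : k, (Lop χ b i ^ e) (Finsupp.single τ c) =
      Finsupp.single (τ * χ i ^ e) d := by
  induction e generalizing τ c with
  | zero =>
      refine ⟨c, ?_⟩
      rw [pow_zero, Module.End.one_apply, cpow_zero, cmul_one]
  | succ e ih =>
      rw [pow_succ, Module.End.mul_apply, Lop_single]
      obtain ⟨d, hd⟩ := ih (τ * χ i) (b i τ * c)
      refine ⟨d, ?_⟩
      rw [hd, cpow_succ', ← cmul_assoc]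

lemma phi_monomial (b : ObjR k G n χ) (u : Fin n →₀ ℕ) (ρ : G →* kˣ) :
    ∃ c : k, phi χ b (monomial u (1 : k)) (Finsupp.single ρ 1) =
      Finsupp.single (ρ * degMon χ u) c := by
  induction u using Finsupp.induction generalizing ρ with
  | zero =>
      refine ⟨1, ?_⟩
      have h1 : (monomial (0 : Fin n →₀ ℕ) (1 : k)) = 1 := by simp
      rw [h1, map_one, Module.End.one_apply, degMon_zero, cmul_one]
  | single_add i e v hiv he ih =>
      have hmon : (monomial (Finsupp.single i e + v) (1 : k)) =
          (X i) ^ e * monomial v 1 := by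
        rw [X_pow_eq_monomial, monomial_mul, one_mul]
      rw [hmon, map_mul, map_pow, phi_X, Module.End.mul_apply]
      obtain ⟨c, hc⟩ := ih ρ
      rw [hc]
      obtain ⟨d, hd⟩ := Lop_pow_single χ b.1 i e (ρ * degMon χ v) c
      refine ⟨d, ?_⟩
      rw [hd, degMon_add, degMon_single, cmul_comm (χ i ^ e) (degMon χ v), ← cmul_assoc]

lemma single_one_not_mem (b : ObjR k G n χ) (ρ : G →* kˣ) :
    Finsupp.single ρ (1 : MvPolynomial (Fin n) k) ∉ Mb χ b.1 := by
  intro h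
  have h2 := Tmap_Mb χ b h
  rw [Tmap_single, map_one, Module.End.one_apply] at h2
  exact one_ne_zero (Finsupp.single_eq_zero.mp h2)

lemma mapPiece_eq (b : ObjR k G n χ) (ρ : G →* kˣ) :
    (homPiece k χ ρ).map ((Mb χ b.1).mkQ.restrictScalars k) =
      Submodule.span k {Submodule.Quotient.mk
        (Finsupp.single ρ (1 : MvPolynomial (Fin n) k))} := by
  rw [homPiece, Submodule.map_span]
  apply le_antisymm
  · rw [Submodule.span_le]
    rintro _ ⟨f, ⟨u, σ, hdeg, rfl⟩, rfl⟩
    obtain ⟨c, hc⟩ := phi_monomial χ b u σ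
    have hnf := NF χ b (Finsupp.single σ (monomial u 1))
    rw [Tmap_single, hc, Sb_single] at hnf
    have hmk : (Mb χ b.1).mkQ.restrictScalars k (Finsupp.single σ (monomial u 1)) =
        Submodule.Quotient.mk (Finsupp.single (σ * degMon χ u) (C c)) := by
      rw [LinearMap.restrictScalars_apply, Submodule.mkQ_apply]
      exact (Submodule.Quotient.eq _).mpr hnf
    have hσρ : σ * degMon χ u = ρ := by rw [cmul_comm]; exact hdeg
    rw [hmk, hσρ, single_C_eq_smul, Submodule.Quotient.mk_smul]
    exact Submodule.smul_mem _ c (Submodule.mem_span_singleton_self _)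
  · rw [Submodule.span_le, Set.singleton_subset_iff]
    refine Submodule.subset_span ⟨Finsupp.single ρ (1 : MvPolynomial (Fin n) k),
      ⟨0, ρ, by rw [degMon_zero, cone_mul], by simp⟩, ?_⟩
    rw [LinearMap.restrictScalars_apply, Submodule.mkQ_apply]

lemma part1 (b : ObjR k G n χ) : IsObjC χ (Mb χ b.1) := by
  refine ⟨Mb_leftIdeal χ b.1, single_one_not_mem χ b, fun ρ => ?_⟩
  rw [mapPiece_eq]
  have hne : (Submodule.Quotient.mk
      (Finsupp.single ρ (1 : MvPolynomial (Fin n) k)) :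
      Acar k G n ⧸ Mb χ b.1) ≠ 0 := by
    rw [Ne, Submodule.Quotient.mk_eq_zero]
    exact single_one_not_mem χ b ρ
  exact finrank_span_singleton hne

lemma part2 : Function.Injective fun b : ObjR k G n χ => Mb χ b.1 := by
  intro b b' hMb
  simp only at hMb
  apply Subtype.ext
  funext i ρ
  have hg : gen χ b.1 i ρ ∈ Mb χ b'.1 := hMb ▸ gen_mem χ b.1 i ρ
  have h0 := Tmap_Mb χ b' hg
  rw [gen_def, map_sub, Tmap_single, Tmap_single, phi_X, Lop_single, phi_C_apply,
    Finsupp.smul_single, smul_eq_mul, sub_eq_zero] at h0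
  have h3 := Finsupp.single_injective (ρ * χ i) h0
  simpa using h3.symm

end Aux4

section Aux5

variable (χ : Fin n → G →* kˣ)

lemma eMul_Sb (σ : G →* kˣ) (v : (G →* kˣ) →₀ k) :
    eMul χ σ (Sb v : Acar k G n) = Finsupp.single σ (C (v σ)) := by
  ext ρ
  rw [eMul_apply, Sb_apply]
  have h := homComp_monomial χ (σ * ρ⁻¹) 0 (v ρ)
  rw [monomial_zero'] at h
  rw [h, degMon_zero]
  by_cases hσ : σ = ρ
  · subst hσ
    rw [if_pos (mul_inv_cancel σ), Finsupp.single_apply, if_pos rfl]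
  · rw [if_neg (fun hc => hσ (mul_inv_eq_one.mp hc)), Finsupp.single_apply, if_neg hσ]

lemma exists_scalar {M : Submodule (MvPolynomial (Fin n) k) (Acar k G n)}
    (hM : IsObjC χ M) (u : Fin n →₀ ℕ) (σ ρ : G →* kˣ) (hdeg : degMon χ u * σ = ρ) :
    ∃ c : k, (Finsupp.single σ (monomial u (1 : k)) : Acar k G n) -
      Finsupp.single ρ (C c) ∈ M := by
  classical
  set W := (homPiece k χ ρ).map (M.mkQ.restrictScalars k) with hW
  have hvmem : (Submodule.Quotient.mk (Finsupp.single ρ (1 : MvPolynomial (Fin n) k)) :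
      Acar k G n ⧸ M) ∈ W := by
    refine ⟨Finsupp.single ρ (1 : MvPolynomial (Fin n) k),
      Submodule.subset_span ⟨0, ρ, by rw [degMon_zero, cone_mul], by simp⟩, ?_⟩
    rw [LinearMap.restrictScalars_apply, Submodule.mkQ_apply]
  have hwmem : (Submodule.Quotient.mk (Finsupp.single σ (monomial u (1 : k))) :
      Acar k G n ⧸ M) ∈ W := by
    refine ⟨Finsupp.single σ (monomial u (1 : k)),
      Submodule.subset_span ⟨u, σ, hdeg, rfl⟩, ?_⟩
    rw [LinearMap.restrictScalars_apply, Submodule.mkQ_apply]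
  have hvne : (⟨_, hvmem⟩ : W) ≠ 0 := by
    intro hc
    have : (Submodule.Quotient.mk (Finsupp.single ρ (1 : MvPolynomial (Fin n) k)) :
        Acar k G n ⧸ M) = 0 := congrArg Subtype.val hc
    rw [Submodule.Quotient.mk_eq_zero] at this
    exact hM.2.1 ρ this
  have hspan := (finrank_eq_one_iff_of_nonzero (⟨_, hvmem⟩ : W) hvne).mp (hM.2.2 ρ)
  have : (⟨_, hwmem⟩ : W) ∈ Submodule.span k {(⟨_, hvmem⟩ : W)} := by
    rw [hspan]; trivial
  obtain ⟨c, hc⟩ := Submodule.mem_span_singleton.mp this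
  refine ⟨c, ?_⟩
  have hval : c • (Submodule.Quotient.mk (Finsupp.single ρ (1 : MvPolynomial (Fin n) k)) :
      Acar k G n ⧸ M) = Submodule.Quotient.mk (Finsupp.single σ (monomial u (1 : k))) :=
    congrArg Subtype.val hc
  rw [← Submodule.Quotient.mk_smul, ← sub_eq_zero, ← Submodule.Quotient.mk_sub,
    Submodule.Quotient.mk_eq_zero] at hval
  have := M.neg_mem hval
  rw [neg_sub] at this
  rw [single_C_eq_smul]
  exact this

lemma scalar_eq_of_mem {M : Submodule (MvPolynomial (Fin n) k) (Acar k G n)}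
    {ρ : G →* kˣ} {c d : k}
    (hne : Finsupp.single ρ (1 : MvPolynomial (Fin n) k) ∉ M)
    (h : (Finsupp.single ρ (C c) : Acar k G n) - Finsupp.single ρ (C d) ∈ M) :
    c = d := by
  have h2 : (Finsupp.single ρ (C (c - d)) : Acar k G n) ∈ M := by
    rw [map_sub, Finsupp.single_sub]
    exact h
  have := scalar_zero_of_mem hne h2
  exact sub_eq_zero.mp this

lemma part3 (M : Submodule (MvPolynomial (Fin n) k) (Acar k G n)) (hM : IsObjC χ M) :
    ∃ b : ObjR k G n χ, Mb χ b.1 = M := by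
  classical
  have hXii : ∀ (i : Fin n), (X i : MvPolynomial (Fin n) k) =
      monomial (Finsupp.single i 1) 1 := fun i => rfl
  have hchoice : ∀ (i : Fin n) (ρ : G →* kˣ), ∃ c : k,
      (Finsupp.single ρ (X i) : Acar k G n) - Finsupp.single (ρ * χ i) (C c) ∈ M := by
    intro i ρ
    obtain ⟨c, hc⟩ := exists_scalar χ hM (Finsupp.single i 1) ρ (ρ * χ i)
      (by rw [degMon_single, show χ i ^ 1 = χ i from pow_one (χ i), cmul_comm])
    exact ⟨c, by rw [hXii i]; exact hc⟩
  set b0 : Fin n → (G →* kˣ) → k := fun i ρ => (hchoice i ρ).choose with hb0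
  have hgen : ∀ (i : Fin n) (ρ : G →* kˣ),
      (Finsupp.single ρ (X i) : Acar k G n) -
        Finsupp.single (ρ * χ i) (C (b0 i ρ)) ∈ M :=
    fun i ρ => (hchoice i ρ).choose_spec
  have hXsmul : ∀ (q : MvPolynomial (Fin n) k) (τ : G →* kˣ)
      (p : MvPolynomial (Fin n) k),
      q • (Finsupp.single τ p : Acar k G n) = Finsupp.single τ (q * p) := by
    intro q τ p
    rw [Finsupp.smul_single, smul_eq_mul]
  have key : ∀ (i j : Fin n) (ρ : G →* kˣ),
      (Finsupp.single ρ ((X i : MvPolynomial (Fin n) k) * X j) : Acar k G n) -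
        Finsupp.single (ρ * χ i * χ j) (C (b0 i ρ * b0 j (ρ * χ i))) ∈ M := by
    intro i j ρ
    have t1 := M.smul_mem (X j) (hgen i ρ)
    rw [smul_sub, hXsmul, hXsmul] at t1
    have t2 := M.smul_mem (C (b0 i ρ)) (hgen j (ρ * χ i))
    rw [smul_sub, hXsmul, hXsmul] at t2
    have hsum := M.add_mem t1 t2
    have heq : ((Finsupp.single ρ ((X j : MvPolynomial (Fin n) k) * X i) : Acar k G n) -
          Finsupp.single (ρ * χ i) ((X j : MvPolynomial (Fin n) k) * C (b0 i ρ)))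
        + ((Finsupp.single (ρ * χ i) (C (b0 i ρ) * X j) : Acar k G n) -
          Finsupp.single (ρ * χ i * χ j) (C (b0 i ρ) * C (b0 j (ρ * χ i))))
        = (Finsupp.single ρ ((X i : MvPolynomial (Fin n) k) * X j) : Acar k G n) -
          Finsupp.single (ρ * χ i * χ j) (C (b0 i ρ * b0 j (ρ * χ i))) := by
      rw [mul_comm (X j : MvPolynomial (Fin n) k) (C (b0 i ρ)),
        mul_comm (X j : MvPolynomial (Fin n) k) (X i : MvPolynomial (Fin n) k),
        ← map_mul]
      abel
    rw [heq] at hsum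
    exact hsum
  have hrel : ∀ (i j : Fin n) (ρ : G →* kˣ),
      b0 j (ρ * χ i) * b0 i ρ = b0 i (ρ * χ j) * b0 j ρ := by
    intro i j ρ
    have h1 := key i j ρ
    have h2 := key j i ρ
    rw [mul_comm (X j : MvPolynomial (Fin n) k) (X i : MvPolynomial (Fin n) k),
      cmul_assoc ρ (χ j) (χ i), cmul_comm (χ j) (χ i), ← cmul_assoc] at h2
    have hd := M.sub_mem h2 h1
    have heq2 : ((Finsupp.single ρ ((X i : MvPolynomial (Fin n) k) * X j) : Acar k G n) -
          Finsupp.single (ρ * χ i * χ j) (C (b0 j ρ * b0 i (ρ * χ j))))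
        - ((Finsupp.single ρ ((X i : MvPolynomial (Fin n) k) * X j) : Acar k G n) -
          Finsupp.single (ρ * χ i * χ j) (C (b0 i ρ * b0 j (ρ * χ i))))
        = (Finsupp.single (ρ * χ i * χ j) (C (b0 i ρ * b0 j (ρ * χ i))) : Acar k G n) -
          Finsupp.single (ρ * χ i * χ j) (C (b0 j ρ * b0 i (ρ * χ j))) := by
      abel
    rw [heq2] at hd
    have := scalar_eq_of_mem (hM.2.1 (ρ * χ i * χ j)) hd
    rw [mul_comm (b0 j (ρ * χ i)) (b0 i ρ), this, mul_comm (b0 j ρ) (b0 i (ρ * χ j))]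
  refine ⟨⟨b0, hrel⟩, le_antisymm ?_ ?_⟩
  · rw [Mb, Submodule.span_le]
    rintro _ ⟨⟨i, ρ⟩, rfl⟩
    exact hgen i ρ
  · intro m hm
    set bb : ObjR k G n χ := ⟨b0, hrel⟩ with hbb
    have hMbM : Mb χ bb.1 ≤ M := by
      rw [Mb, Submodule.span_le]
      rintro _ ⟨⟨i, ρ⟩, rfl⟩
      exact hgen i ρ
    have hnf := NF χ bb m
    have hs : (Sb (Tmap χ bb m) : Acar k G n) ∈ M := by
      have h1 : m - Sb (Tmap χ bb m) ∈ M := hMbM hnf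
      have h2 := M.sub_mem hm h1
      rw [sub_sub_cancel] at h2
      exact h2
    have hT0 : ∀ σ, Tmap χ bb m σ = 0 := by
      intro σ
      have h1 := hM.1 σ _ hs
      rw [eMul_Sb] at h1
      exact scalar_zero_of_mem (hM.2.1 σ) h1
    have hT : Tmap χ bb m = 0 := Finsupp.ext hT0
    rw [hT, map_zero, sub_zero] at hnf
    exact hnf

end Aux5

section Aux6

variable (χ : Fin n → G →* kˣ)

lemma homComp_C_mul (τ : G →* kˣ) (c : k) (p : MvPolynomial (Fin n) k) :
    homComp χ τ (C c * p) = C c * homComp χ τ p := by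
  ext v
  rw [coeff_homComp, coeff_C_mul, coeff_C_mul, coeff_homComp]
  split
  · rfl
  · rw [mul_zero]

/-- The `S`-linear endomorphism of `A` multiplying the `ρ`-component by `h ρ`. -/
noncomputable def Hmap (h : (G →* kˣ) → k) : Acar k G n →ₗ[MvPolynomial (Fin n) k] Acar k G n :=
  Finsupp.lsum ℕ fun ρ => (Finsupp.lsingle ρ).comp
    (LinearMap.mulLeft (MvPolynomial (Fin n) k) (C (h ρ)))

lemma Hmap_single (h : (G →* kˣ) → k) (ρ : G →* kˣ) (p : MvPolynomial (Fin n) k) :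
    Hmap h (Finsupp.single ρ p) = Finsupp.single ρ (C (h ρ) * p) := by
  simp [Hmap]

lemma Hmap_apply (h : (G →* kˣ) → k) (m : Acar k G n) (ρ : G →* kˣ) :
    Hmap h m ρ = C (h ρ) * m ρ := by
  induction m using Finsupp.induction_linear with
  | zero => simp
  | add f g hf hg => rw [map_add, Finsupp.add_apply, hf, hg, Finsupp.add_apply, mul_add]
  | single τ p =>
      rw [Hmap_single, Finsupp.single_apply, Finsupp.single_apply]
      by_cases hτ : τ = ρ
      · rw [if_pos hτ, if_pos hτ]
        subst hτ
        rfl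
      · rw [if_neg hτ, if_neg hτ, mul_zero]

lemma Hmap_eMul (h : (G →* kˣ) → k) (σ : G →* kˣ) (m : Acar k G n) :
    eMul χ σ (Hmap h m) = Hmap h (eMul χ σ m) := by
  ext ρ
  rw [eMul_apply, Hmap_apply, Hmap_apply, eMul_apply, homComp_C_mul]

set_option maxHeartbeats 1000000 in
lemma part4 (b b' : ObjR k G n χ) :
    ∃ Φ : HomR χ b b' ≃ HomC χ (Mb χ b'.1) (Mb χ b.1),
      ∀ (h : HomR χ b b') (ρ : G →* kˣ),
        (Φ h).1 (Finsupp.single ρ (1 : MvPolynomial (Fin n) k)) =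
          Submodule.Quotient.mk (Finsupp.single ρ (C (h.1 ρ))) := by
  classical
  -- the forward map
  have hker : ∀ h : HomR χ b b', ∀ m ∈ Mb χ b'.1,
      ((Mb χ b.1).mkQ.comp (Hmap h.1)) m = 0 := by
    intro h m hm
    refine Submodule.span_induction ?_ ?_ ?_ ?_ hm
    · rintro _ ⟨⟨i, ρ⟩, rfl⟩
      rw [LinearMap.comp_apply, Submodule.mkQ_apply, Submodule.Quotient.mk_eq_zero]
      have hg : Hmap h.1 (gen χ b'.1 i ρ) = (C (h.1 ρ) : MvPolynomial (Fin n) k) • gen χ b.1 i ρ := by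
        rw [gen_def, gen_def, map_sub, Hmap_single, Hmap_single, smul_sub,
          Finsupp.smul_single, Finsupp.smul_single, smul_eq_mul, smul_eq_mul,
          ← map_mul, ← map_mul]
        have hco : h.1 (ρ * χ i) * b'.1 i ρ = h.1 ρ * b.1 i ρ := by
          rw [← h.2 i ρ, mul_comm]
        rw [hco]
      rw [hg]
      exact (Mb χ b.1).smul_mem _ (gen_mem χ b.1 i ρ)
    · rw [map_zero]
    · intro x y _ _ hx hy
      rw [map_add, hx, hy, add_zero]
    · intro p x _ hx
      rw [map_smul, hx, smul_zero]
  have hcomm : ∀ h : HomR χ b b', ∀ (σ : G →* kˣ) (m m' : Acar k G n),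
      Submodule.Quotient.mk m' = ((Mb χ b.1).mkQ.comp (Hmap h.1)) m →
        Submodule.Quotient.mk (eMul χ σ m') =
          ((Mb χ b.1).mkQ.comp (Hmap h.1)) (eMul χ σ m) := by
    intro h σ m m' hmk
    rw [LinearMap.comp_apply, Submodule.mkQ_apply] at hmk ⊢
    rw [Submodule.Quotient.eq] at hmk ⊢
    rw [← Hmap_eMul, ← eMul_sub]
    exact Mb_leftIdeal χ b.1 σ _ hmk
  set ΦFun : HomR χ b b' → HomC χ (Mb χ b'.1) (Mb χ b.1) :=
    fun h => ⟨(Mb χ b.1).mkQ.comp (Hmap h.1), hker h, hcomm h⟩ with hΦFun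
  have hformula : ∀ (h : HomR χ b b') (ρ : G →* kˣ),
      (ΦFun h).1 (Finsupp.single ρ (1 : MvPolynomial (Fin n) k)) =
        Submodule.Quotient.mk (Finsupp.single ρ (C (h.1 ρ))) := by
    intro h ρ
    rw [hΦFun]
    rw [LinearMap.comp_apply, Submodule.mkQ_apply, Hmap_single, mul_one]
  have hinj : Function.Injective ΦFun := by
    intro h h' hhh
    apply Subtype.ext
    funext ρ
    have h1 := congrArg (fun F => F.1 (Finsupp.single ρ (1 : MvPolynomial (Fin n) k))) hhh
    simp only [hformula] at h1
    rw [Submodule.Quotient.eq] at h1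
    exact scalar_eq_of_mem (single_one_not_mem χ b ρ) h1
  have hsurj : Function.Surjective ΦFun := by
    intro F
    obtain ⟨f, hf1, hf2⟩ := F
    -- pick representatives of f (e_ρ)
    have hrep : ∀ ρ : G →* kˣ, ∃ m : Acar k G n,
        Submodule.Quotient.mk m = f (Finsupp.single ρ (1 : MvPolynomial (Fin n) k)) :=
      fun ρ => Submodule.Quotient.mk_surjective _ _
    set d : (G →* kˣ) → ((G →* kˣ) →₀ k) :=
      fun ρ => Tmap χ b (hrep ρ).choose with hd
    -- mk (Sb (d ρ)) = f e_ρ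
    have hmkSb : ∀ ρ, Submodule.Quotient.mk (Sb (d ρ) : Acar k G n) =
        f (Finsupp.single ρ (1 : MvPolynomial (Fin n) k)) := by
      intro ρ
      rw [← (hrep ρ).choose_spec, Submodule.Quotient.eq]
      have := (Mb χ b.1).neg_mem (NF χ b (hrep ρ).choose)
      rw [neg_sub] at this
      exact this
    -- off-diagonal components vanish
    have hoff : ∀ ρ σ : G →* kˣ, σ ≠ ρ → d ρ σ = 0 := by
      intro ρ σ hne
      have h1 : (Finsupp.single ρ (1 : MvPolynomial (Fin n) k) : Acar k G n) = Finsupp.single ρ (C 1) := by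
        rw [map_one]
      have h2 := hf2 σ (Finsupp.single ρ (1 : MvPolynomial (Fin n) k)) (Sb (d ρ)) (hmkSb ρ)
      rw [eMul_Sb] at h2
      have h3 : eMul χ σ (Finsupp.single ρ (1 : MvPolynomial (Fin n) k)) = 0 := by
        rw [h1, eMul_single_C, if_neg hne]
      rw [h3, map_zero] at h2
      rw [Submodule.Quotient.mk_eq_zero] at h2
      exact scalar_zero_of_mem (single_one_not_mem χ b σ) h2
    set h0 : (G →* kˣ) → k := fun ρ => d ρ ρ with hh0
    -- f e_ρ = mk (single ρ (C (h0 ρ)))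
    have hone : ∀ ρ, f (Finsupp.single ρ (1 : MvPolynomial (Fin n) k)) =
        Submodule.Quotient.mk (Finsupp.single ρ (C (h0 ρ))) := by
      intro ρ
      have hdiag : d ρ = Finsupp.single ρ (h0 ρ) := by
        ext σ
        rcases eq_or_ne σ ρ with rfl | hne
        · rw [Finsupp.single_apply, if_pos rfl]
        · rw [hoff ρ σ hne, Finsupp.single_apply, if_neg (Ne.symm hne)]
      rw [← hmkSb ρ, hdiag, Sb_single]
    -- f on a general single
    have hfs : ∀ (ρ : G →* kˣ) (p : MvPolynomial (Fin n) k), f (Finsupp.single ρ p) =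
        Submodule.Quotient.mk (Finsupp.single ρ (p * C (h0 ρ))) := by
      intro ρ p
      have h1 : (Finsupp.single ρ p : Acar k G n) = p • Finsupp.single ρ (1 : MvPolynomial (Fin n) k) := by
        rw [Finsupp.smul_single, smul_eq_mul, mul_one]
      rw [h1, map_smul, hone ρ, ← Submodule.Quotient.mk_smul, Finsupp.smul_single,
        smul_eq_mul]
    -- h0 is a morphism in R
    have hmor : ∀ (i : Fin n) (ρ : G →* kˣ),
        b.1 i ρ * h0 ρ = h0 (ρ * χ i) * b'.1 i ρ := by
      intro i ρ
      have hg := hf1 (gen χ b'.1 i ρ) (gen_mem χ b'.1 i ρ)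
      rw [gen_def, map_sub, hfs, hfs, ← Submodule.Quotient.mk_sub] at hg
      rw [Submodule.Quotient.mk_eq_zero] at hg
      -- single ρ (X i * C h0ρ) - single (ρχi) (C (b' i ρ) * C (h0 (ρχi))) ∈ Mb b
      have hg2 : (C (h0 ρ) : MvPolynomial (Fin n) k) • gen χ b.1 i ρ ∈ Mb χ b.1 :=
        (Mb χ b.1).smul_mem _ (gen_mem χ b.1 i ρ)
      rw [gen_def, smul_sub, Finsupp.smul_single, Finsupp.smul_single, smul_eq_mul,
        smul_eq_mul] at hg2
      have hsub := (Mb χ b.1).sub_mem hg hg2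
      have heq : ((Finsupp.single ρ ((X i : MvPolynomial (Fin n) k) * C (h0 ρ)) : Acar k G n) -
            Finsupp.single (ρ * χ i) (C (b'.1 i ρ) * C (h0 (ρ * χ i))))
          - ((Finsupp.single ρ (C (h0 ρ) * X i) : Acar k G n) -
            Finsupp.single (ρ * χ i) (C (h0 ρ) * C (b.1 i ρ)))
          = (Finsupp.single (ρ * χ i) (C (h0 ρ * b.1 i ρ)) : Acar k G n) -
            Finsupp.single (ρ * χ i) (C (b'.1 i ρ * h0 (ρ * χ i))) := by
        rw [mul_comm (X i : MvPolynomial (Fin n) k) (C (h0 ρ)), ← map_mul, ← map_mul]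
        abel
      rw [heq] at hsub
      have := scalar_eq_of_mem (single_one_not_mem χ b (ρ * χ i)) hsub
      rw [mul_comm (b.1 i ρ) (h0 ρ), this, mul_comm (b'.1 i ρ) (h0 (ρ * χ i))]
    refine ⟨⟨h0, hmor⟩, ?_⟩
    apply Subtype.ext
    show (Mb χ b.1).mkQ.comp (Hmap h0) = f
    apply Finsupp.lhom_ext
    intro ρ p
    rw [LinearMap.comp_apply, Submodule.mkQ_apply, Hmap_single, hfs,
      mul_comm (C (h0 ρ)) p]
  exact ⟨Equiv.ofBijective ΦFun ⟨hinj, hsurj⟩, hformula⟩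

end Aux6
/-- There is a contravariant functor `Ψ : 𝓡 → 𝓒`, `b ↦ A/M_b`, sending a
morphism `h : b → b'` to the map `A/M_{b'} → A/M_b`, `e_ρ ↦ h_ρ e_ρ`, and `Ψ`
is an isomorphism of categories: it is bijective on objects and bijective on
Hom-sets. -/
theorem functor_Psi_isomorphism_of_categories (χ : Fin n → G →* kˣ) :
    (∀ b : ObjR k G n χ, IsObjC χ (Mb χ b.1)) ∧
    (Function.Injective fun b : ObjR k G n χ => Mb χ b.1) ∧
    (∀ M : Submodule (MvPolynomial (Fin n) k) (Acar k G n),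
      IsObjC χ M → ∃ b : ObjR k G n χ, Mb χ b.1 = M) ∧
    (∀ b b' : ObjR k G n χ,
      ∃ Φ : HomR χ b b' ≃ HomC χ (Mb χ b'.1) (Mb χ b.1),
        ∀ (h : HomR χ b b') (ρ : G →* kˣ),
          (Φ h).1 (Finsupp.single ρ (1 : MvPolynomial (Fin n) k)) =
            Submodule.Quotient.mk (Finsupp.single ρ (C (h.1 ρ)))) :=
  ⟨part1 χ, part2 χ, part3 χ, part4 χ⟩

end
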